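/- Let X be a compact metrizable space such that S³ is an absolute extensor of X (dim X ≤ 3). If ℝP^∞ is an absolute extensor of X, then ℝP³ is an absolute extensor of X. -/

import Mathlib

noncomputable section
open Metric Set

open Metric Set

abbrev USphere (n : ℕ) : Type :=
  (sphere (0 : EuclideanSpace ℝ (Fin (n+1))) 1 : Set (EuclideanSpace ℝ (Fin (n+1))))

def antipodalSetoid (n : ℕ) : Setoid (USphere n) where
  r x y := (x : EuclideanSpace ℝ (Fin (n+1))) = (y : EuclideanSpace ℝ (Fin (n+1)))
    ∨ (x : EuclideanSpace ℝ (Fin (n+1))) = -(y : EuclideanSpace ℝ (Fin (n+1)))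
  iseqv := by
    constructor
    · intro x; exact Or.inl rfl
    · rintro x y (h | h)
      · exact Or.inl h.symm
      · right; rw [h]; simp
    · rintro x y z (h1 | h1) (h2 | h2)
      · exact Or.inl (h1.trans h2)
      · right; rw [h1, h2]
      · right; rw [h1, h2]
      · left; rw [h1, h2]; simp

def RP (n : ℕ) : Type := Quotient (antipodalSetoid n)

instance (n : ℕ) : TopologicalSpace (RP n) := by unfold RP; infer_instance

/-- `K` is an absolute extensor of `X`: every continuous map into `K` defined on a closed
subset of `X` extends to a continuous map on all of `X`. -/
def IsAbsoluteExtensor (X : Type*) [TopologicalSpace X] (K : Type*) [TopologicalSpace K] : Prop :=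
  ∀ A : Set X, IsClosed A → ∀ f : C(A, K), ∃ g : C(X, K), ∀ a : A, g a = f a

/-- The covering projection from the sphere to projective space. -/
def pcov (n : ℕ) : USphere n → RP n := fun z => Quotient.mk (antipodalSetoid n) z

def coordIncl (n : ℕ) (x : EuclideanSpace ℝ (Fin (n+1))) : EuclideanSpace ℝ (Fin (n+2)) :=
  WithLp.toLp 2 (fun i : Fin (n+2) => if h : (i : ℕ) < n + 1 then x ⟨i, h⟩ else 0)

lemma coordIncl_mem (n : ℕ) (x : USphere n) :
    coordIncl n (x : EuclideanSpace ℝ (Fin (n+1))) ∈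
      sphere (0 : EuclideanSpace ℝ (Fin (n+2))) 1 := by
  obtain ⟨x, hx⟩ := x
  rw [mem_sphere_iff_norm, sub_zero, EuclideanSpace.norm_eq] at hx ⊢
  have h2 : ∑ i : Fin (n+2), ‖coordIncl n x i‖ ^ 2 = ∑ i : Fin (n+1), ‖x i‖ ^ 2 := by
    rw [Fin.sum_univ_castSucc]
    simp [coordIncl, Fin.is_le]
  rw [h2]; exact hx

lemma coordIncl_neg (n : ℕ) (x : EuclideanSpace ℝ (Fin (n+1))) :
    coordIncl n (-x) = -(coordIncl n x) := by
  ext i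
  by_cases h : (i : ℕ) ≤ n <;> simp [coordIncl, h]

/-- The equatorial inclusion of spheres. -/
def sphereIncl (n : ℕ) : USphere n → USphere (n+1) :=
  fun x => ⟨coordIncl n (x : EuclideanSpace ℝ (Fin (n+1))), coordIncl_mem n x⟩

/-- The standard (equatorial) inclusion `ℝPⁿ → ℝP^(n+1)`. -/
def rpIncl (n : ℕ) : RP n → RP (n+1) :=
  Quotient.map' (sphereIncl n) (by
    rintro x y (h | h)
    · left; show coordIncl n _ = coordIncl n _; rw [h]
    · right
      show coordIncl n (x : EuclideanSpace ℝ (Fin (n+1))) = -(coordIncl n _)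
      rw [h, coordIncl_neg])
open Metric Set

/-- The real Hilbert space ℓ². -/
abbrev Hilbertl2 : Type := lp (fun _ : ℕ => ℝ) 2

def antipodalSetoidInf : Setoid (sphere (0 : Hilbertl2) 1 : Set Hilbertl2) where
  r x y := (x : Hilbertl2) = (y : Hilbertl2) ∨ (x : Hilbertl2) = -(y : Hilbertl2)
  iseqv := by
    constructor
    · intro x; exact Or.inl rfl
    · rintro x y (h | h)
      · exact Or.inl h.symm
      · right; rw [h]; simp
    · rintro x y z (h1 | h1) (h2 | h2)
      · exact Or.inl (h1.trans h2)
      · right; rw [h1, h2]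
      · right; rw [h1, h2]
      · left; rw [h1, h2]; simp

/-- Infinite real projective space: the quotient of the unit sphere of ℓ² by the
antipodal identification. -/
def RPInf : Type := Quotient antipodalSetoidInf

instance : TopologicalSpace RPInf := by unfold RPInf; infer_instance
abbrev UBall3 : Type := (closedBall (0 : EuclideanSpace ℝ (Fin 3)) 1 : Set (EuclideanSpace ℝ (Fin 3)))

def hemiLift (x : EuclideanSpace ℝ (Fin 3)) : EuclideanSpace ℝ (Fin 4) :=
  WithLp.toLp 2 (fun i : Fin 4 => if h : (i : ℕ) < 3 then x ⟨i, h⟩ else Real.sqrt (1 - ‖x‖ ^ 2))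

lemma hemiLift_mem (x : UBall3) :
    hemiLift (x : EuclideanSpace ℝ (Fin 3)) ∈ sphere (0 : EuclideanSpace ℝ (Fin 4)) 1 := by
  obtain ⟨x, hx⟩ := x
  rw [mem_closedBall, dist_zero_right] at hx
  have hx2 : ‖x‖ ^ 2 ≤ 1 := by nlinarith [norm_nonneg x]
  have hsum : ∑ i : Fin 3, ‖x i‖ ^ 2 = ‖x‖ ^ 2 := by
    rw [EuclideanSpace.norm_eq, Real.sq_sqrt]
    positivity
  rw [mem_sphere_iff_norm, sub_zero, EuclideanSpace.norm_eq]
  have h2 : ∑ i : Fin 4, ‖hemiLift x i‖ ^ 2 = 1 := by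
    rw [Fin.sum_univ_castSucc]
    have hlast : ‖hemiLift x (Fin.last 3)‖ ^ 2 = 1 - ‖x‖ ^ 2 := by
      simp only [hemiLift, Fin.last, PiLp.toLp_apply]
      rw [dif_neg (by norm_num)]
      rw [Real.norm_eq_abs, sq_abs, Real.sq_sqrt (by linarith)]
    have hcast : ∀ i : Fin 3, ‖hemiLift x (Fin.castSucc i)‖ ^ 2 = ‖x i‖ ^ 2 := by
      intro i
      simp only [hemiLift, PiLp.toLp_apply]
      rw [dif_pos (by exact i.is_lt)]
      congr 1
    rw [hlast]
    rw [Finset.sum_congr rfl (fun i _ => hcast i), hsum]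
    ring
  rw [h2, Real.sqrt_one]

/-- The quotient map `q₃ : B³ → ℝP³` (identify `B³` with the upper hemisphere of `S³`). -/
def q3 : UBall3 → RP 3 := fun x => pcov 3 ⟨hemiLift (x : EuclideanSpace ℝ (Fin 3)), hemiLift_mem x⟩

/-! ### The first modification of ℝP³ -/

/-- The disk of radius 1/3 (the meridian disk `D`). -/
abbrev DiskThird : Type :=
  (closedBall (0 : EuclideanSpace ℝ (Fin 2)) (1/3) : Set (EuclideanSpace ℝ (Fin 2)))

/-- The parametrization of the solid torus `L ⊂ B³`, obtained by rotating the disk `D`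
(of radius 1/3, centered at `(0,1/2,0)` in the yz-plane) about the z-axis. -/
def LparamE (s : USphere 1) (d : EuclideanSpace ℝ (Fin 2)) : EuclideanSpace ℝ (Fin 3) :=
  WithLp.toLp 2 (fun i : Fin 3 =>
    if i = 0 then -((s : EuclideanSpace ℝ (Fin 2)) 1) * (1/2 + d 0)
    else if i = 1 then ((s : EuclideanSpace ℝ (Fin 2)) 0) * (1/2 + d 0)
    else d 1)

lemma circle_sq_sum (s : USphere 1) :
    ((s : EuclideanSpace ℝ (Fin 2)) 0) ^ 2 + ((s : EuclideanSpace ℝ (Fin 2)) 1) ^ 2 = 1 := by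
  obtain ⟨s, hs⟩ := s
  rw [mem_sphere_iff_norm, sub_zero, EuclideanSpace.norm_eq] at hs
  have h0 : (0:ℝ) ≤ ∑ i : Fin 2, ‖s i‖ ^ 2 := by positivity
  have := Real.sq_sqrt h0
  rw [hs] at this
  rw [Fin.sum_univ_two] at this
  simpa [Real.norm_eq_abs, sq_abs] using this.symm

lemma disk_sq_sum (d : EuclideanSpace ℝ (Fin 2)) (hd : d ∈ closedBall (0 : EuclideanSpace ℝ (Fin 2)) (1/3)) :
    (d 0) ^ 2 + (d 1) ^ 2 ≤ 1/9 := by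
  rw [mem_closedBall, dist_zero_right, EuclideanSpace.norm_eq] at hd
  have h0 : (0:ℝ) ≤ ∑ i : Fin 2, ‖d i‖ ^ 2 := by positivity
  have h1 := Real.sq_sqrt h0
  have h2 : (∑ i : Fin 2, ‖d i‖ ^ 2) ≤ 1/9 := by
    nlinarith [Real.sqrt_nonneg (∑ i : Fin 2, ‖d i‖ ^ 2)]
  rw [Fin.sum_univ_two] at h2
  simpa [Real.norm_eq_abs, sq_abs] using h2

lemma LparamE_normsq (s : USphere 1) (d : EuclideanSpace ℝ (Fin 2))
    (hd : d ∈ closedBall (0 : EuclideanSpace ℝ (Fin 2)) (1/3)) :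
    ‖LparamE s d‖ ^ 2 ≤ 7/10 := by
  have hs := circle_sq_sum s
  have hdd := disk_sq_sum d hd
  have hd0 : (d 0) ^ 2 ≤ 1/9 := by nlinarith [sq_nonneg (d 1)]
  have hd0' : d 0 ≤ 1/3 := by nlinarith
  rw [EuclideanSpace.norm_eq, Real.sq_sqrt (by positivity)]
  rw [Fin.sum_univ_three]
  simp only [LparamE, PiLp.toLp_apply]
  norm_num [Fin.ext_iff]
  simp only [Real.norm_eq_abs, mul_pow, sq_abs]
  have key : ((s : EuclideanSpace ℝ (Fin 2)) 1) ^ 2 * (1/2 + d 0) ^ 2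
      + ((s : EuclideanSpace ℝ (Fin 2)) 0) ^ 2 * (1/2 + d 0) ^ 2 = (1/2 + d 0) ^ 2 := by
    linear_combination (1/2 + d 0) ^ 2 * hs
  nlinarith [sq_nonneg (d 1), sq_nonneg (1/2 + d 0)]

lemma LparamE_mem (s : USphere 1) (d : EuclideanSpace ℝ (Fin 2))
    (hd : d ∈ closedBall (0 : EuclideanSpace ℝ (Fin 2)) (1/3)) :
    LparamE s d ∈ closedBall (0 : EuclideanSpace ℝ (Fin 3)) 1 := by
  rw [mem_closedBall, dist_zero_right]
  have h := LparamE_normsq s d hd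
  nlinarith [norm_nonneg (LparamE s d)]

/-- The solid torus `L`, viewed as a subset of `ℝP³` (it misses the boundary sphere). -/
def LsetRP : Set (RP 3) :=
  {p | ∃ (s : USphere 1) (d : EuclideanSpace ℝ (Fin 2))
    (hd : d ∈ closedBall (0 : EuclideanSpace ℝ (Fin 2)) (1/3)),
      q3 ⟨LparamE s d, LparamE_mem s d hd⟩ = p}

/-- The point of the boundary circle `∂D` corresponding to `z ∈ S¹` under the standard
identification `ℝP¹ ≅ ∂D` (via the squaring map on the circle). -/
def bdPtE (z : USphere 1) : EuclideanSpace ℝ (Fin 2) :=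
  WithLp.toLp 2 (fun i : Fin 2 =>
    if i = 0 then (((z : EuclideanSpace ℝ (Fin 2)) 0) ^ 2 - ((z : EuclideanSpace ℝ (Fin 2)) 1) ^ 2) / 3
    else (2 * ((z : EuclideanSpace ℝ (Fin 2)) 0) * ((z : EuclideanSpace ℝ (Fin 2)) 1)) / 3)

lemma bdPtE_mem (z : USphere 1) : bdPtE z ∈ closedBall (0 : EuclideanSpace ℝ (Fin 2)) (1/3) := by
  have hz := circle_sq_sum z
  rw [mem_closedBall, dist_zero_right, EuclideanSpace.norm_eq]
  have h1 : ∑ i : Fin 2, ‖bdPtE z i‖ ^ 2 = (1/3 : ℝ) ^ 2 := by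
    rw [Fin.sum_univ_two]
    simp only [bdPtE, PiLp.toLp_apply]
    norm_num [Fin.ext_iff]
    simp only [div_pow, mul_pow, sq_abs]
    linear_combination ((((z : EuclideanSpace ℝ (Fin 2)) 0) ^ 2 + ((z : EuclideanSpace ℝ (Fin 2)) 1) ^ 2 + 1) / 9) * hz
  rw [h1, Real.sqrt_sq (by norm_num)]

lemma bdPtE_neg (z w : USphere 1)
    (h : (z : EuclideanSpace ℝ (Fin 2)) = -(w : EuclideanSpace ℝ (Fin 2))) :
    bdPtE z = bdPtE w := by
  ext i
  have h0 : (z : EuclideanSpace ℝ (Fin 2)) 0 = -((w : EuclideanSpace ℝ (Fin 2)) 0) := by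
    rw [h]; rfl
  have h1 : (z : EuclideanSpace ℝ (Fin 2)) 1 = -((w : EuclideanSpace ℝ (Fin 2)) 1) := by
    rw [h]; rfl
  simp only [bdPtE, PiLp.toLp_apply, h0, h1]
  ring_nf

/-- The attaching map `S¹ × ℝP¹ → ℝP³` onto the boundary `∂L` of the solid torus,
using the identification of `ℝP¹` with `∂D`. -/
def attachM1 (s : USphere 1) : RP 1 → RP 3 :=
  Quotient.lift (fun z : USphere 1 => q3 ⟨LparamE s (bdPtE z), LparamE_mem s (bdPtE z) (bdPtE_mem z)⟩)
    (by
      rintro z w (h | h)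
      · have : z = w := Subtype.ext h
        rw [this]
      · have : bdPtE z = bdPtE w := bdPtE_neg z w h
        simp only [this])

/-- The underlying type of the first modification `M₁` of `ℝP³`: the disjoint union of
`ℝP³` minus the interior of the solid torus `L` and of `S¹ × ℝP²`. -/
abbrev M1Carrier : Type := {p : RP 3 // p ∉ interior LsetRP} ⊕ (USphere 1 × RP 2)

/-- The gluing relation for the first modification: a boundary point `attachM1 s c ∈ ∂L`
is identified with the point `(s, c) ∈ S¹ × ℝP¹ ⊂ S¹ × ℝP²`. -/
def M1Rel : M1Carrier → M1Carrier → Prop := fun p q =>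
  ∃ (s : USphere 1) (c : RP 1) (h : attachM1 s c ∉ interior LsetRP),
    p = Sum.inl ⟨attachM1 s c, h⟩ ∧ q = Sum.inr (s, rpIncl 1 c)

/-- The first modification `M₁` of `ℝP³`: remove the interior of the solid torus `L` and
attach `S¹ × ℝP²` via the map `S¹ × ℝP¹ → ∂L`. -/
def M1 : Type := Quot M1Rel

instance : TopologicalSpace M1 := by unfold M1; infer_instance

lemma rpIncl_not_mem_LsetRP (c : RP 2) : rpIncl 2 c ∉ LsetRP := by
  rintro ⟨s, d, hd, heq⟩
  obtain ⟨y, rfl⟩ := Quotient.exists_rep c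
  have hmk : rpIncl 2 (Quotient.mk (antipodalSetoid 2) y)
      = Quotient.mk (antipodalSetoid 3) (sphereIncl 2 y) := rfl
  rw [hmk] at heq
  have heq' := Quotient.exact heq
  have hpos : 0 < Real.sqrt (1 - ‖LparamE s d‖ ^ 2) := by
    apply Real.sqrt_pos.mpr
    have := LparamE_normsq s d hd
    linarith
  have hlift3 : hemiLift (LparamE s d) 3 = Real.sqrt (1 - ‖LparamE s d‖ ^ 2) := by
    simp only [hemiLift, PiLp.toLp_apply]
    rw [dif_neg (by decide)]
  have hincl3 : (sphereIncl 2 y : EuclideanSpace ℝ (Fin 4)) 3 = 0 := by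
    show coordIncl 2 (y : EuclideanSpace ℝ (Fin 3)) 3 = 0
    simp only [coordIncl, PiLp.toLp_apply]
    rw [dif_neg (by decide)]
  rcases heq' with h | h
  · have h3' : hemiLift (LparamE s d) 3 = (sphereIncl 2 y : EuclideanSpace ℝ (Fin 4)) 3 :=
      congrArg (fun v : EuclideanSpace ℝ (Fin 4) => v 3) h
    rw [hlift3, hincl3] at h3'
    linarith
  · have h3' : hemiLift (LparamE s d) 3 = -((sphereIncl 2 y : EuclideanSpace ℝ (Fin 4)) 3) :=
      congrArg (fun v : EuclideanSpace ℝ (Fin 4) => v 3) h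
    rw [hlift3, hincl3, neg_zero] at h3'
    linarith

lemma rpIncl_not_mem_interior_LsetRP (c : RP 2) : rpIncl 2 c ∉ interior LsetRP :=
  fun h => rpIncl_not_mem_LsetRP c (interior_subset h)

/-- The copy of the projective plane `ℝP² = q₃(∂B³)` inside the first modification `M₁`. -/
def rp2ToM1 : RP 2 → M1 :=
  fun c => Quot.mk M1Rel (Sum.inl ⟨rpIncl 2 c, rpIncl_not_mem_interior_LsetRP c⟩)

/-! ### The second modification of ℝP³ -/

/-- The solid torus `R = q₃(L) ⊂ ℝP³`, where `L ⊂ B³` is the cylinder `x² + y² ≤ 1/4`. -/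
def RsetRP : Set (RP 3) :=
  {p | ∃ x : UBall3, ((x : EuclideanSpace ℝ (Fin 3)) 0) ^ 2 + ((x : EuclideanSpace ℝ (Fin 3)) 1) ^ 2 ≤ 1/4
        ∧ q3 x = p}

/-- The copy of `ℝP² = q₃(∂B³)` inside `ℝP³`. -/
def RP2in3 : Set (RP 3) := Set.range (rpIncl 2)

/-- The disk `D = R ∩ ℝP²`. -/
def DsetM2 : Set (RP 3) := RsetRP ∩ RP2in3

/-- The boundary circle `∂D = D ∩ ∂R` of the disk `D`. -/
def bdDM2 : Set (RP 3) := DsetM2 ∩ frontier RsetRP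

/-- The subspace `T = S¹ × ℝP² ∪ {a} × ℝP³` of `S¹ × ℝP³`. -/
def TSpace (a : USphere 1) : Type :=
  {p : USphere 1 × RP 3 // (∃ c : RP 2, p.2 = rpIncl 2 c) ∨ p.1 = a}

instance (a : USphere 1) : TopologicalSpace (TSpace a) := by unfold TSpace; infer_instance

/-- The projection `π : T → S¹` onto the first coordinate. -/
def TProj (a : USphere 1) : C(TSpace a, USphere 1) :=
  ⟨fun p => p.val.1, by exact (continuous_fst.comp continuous_subtype_val)⟩

/-- The underlying type of the second modification `M₂` of `ℝP³`. -/
abbrev M2Carrier (a : USphere 1) : Type := {p : RP 3 // p ∉ interior RsetRP} ⊕ (TSpace a)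

/-- The gluing relation for the second modification, relative to a solid-torus structure
`φ : S¹ × D ≃ₜ R` on `R` and an identification `ψ : ∂D ≃ₜ ℝP¹`: a point `φ(s,d) ∈ ∂R` is
identified with the point `(s, ψ d) ∈ S¹ × ℝP¹ ⊂ S¹ × ℝP² ⊂ T`. -/
def M2Rel (a : USphere 1) (φ : (USphere 1 × ↥DsetM2) ≃ₜ ↥RsetRP) (ψ : ↥bdDM2 ≃ₜ RP 1) :
    M2Carrier a → M2Carrier a → Prop := fun p q =>
  ∃ (s : USphere 1) (d : ↥bdDM2) (h : (φ (s, ⟨d.val, d.prop.1⟩)).val ∉ interior RsetRP),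
    p = Sum.inl ⟨(φ (s, ⟨d.val, d.prop.1⟩)).val, h⟩ ∧
    q = Sum.inr ⟨(s, rpIncl 2 (rpIncl 1 (ψ d))), Or.inl ⟨rpIncl 1 (ψ d), rfl⟩⟩

/-- The second modification `M₂` of `ℝP³`: remove the interior of the solid torus `R` and
attach `S¹ × ℝP² ∪ {a} × ℝP³` via the inclusion `∂R = S¹ × ∂D → S¹ × ℝP² ∪ {a} × ℝP³`. -/
def M2 (a : USphere 1) (φ : (USphere 1 × ↥DsetM2) ≃ₜ ↥RsetRP) (ψ : ↥bdDM2 ≃ₜ RP 1) : Type :=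
  Quot (M2Rel a φ ψ)

instance (a : USphere 1) (φ : (USphere 1 × ↥DsetM2) ≃ₜ ↥RsetRP) (ψ : ↥bdDM2 ≃ₜ RP 1) :
    TopologicalSpace (M2 a φ ψ) := by unfold M2; infer_instance

open Topology

-- general topology helpers
section Helpers
variable {α β γ : Type*} [TopologicalSpace α] [TopologicalSpace β] [TopologicalSpace γ]

lemma isOpenMap_mk_of_invol (s : Setoid α) (n : α → α) (hn : Continuous n)
    (hinv : ∀ x, n (n x) = x) (hrel : ∀ x y, s.r x y ↔ (x = y ∨ x = n y)) :
    IsOpenMap (Quotient.mk s) := by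
  intro U hU
  letI := s
  have hset : Quotient.mk s ⁻¹' (Quotient.mk s '' U) = U ∪ n ⁻¹' U := by
    ext x
    simp only [mem_preimage, mem_image, mem_union]
    constructor
    · rintro ⟨u, hu, he⟩
      have : s.r u x := Quotient.exact he
      rcases (hrel u x).mp this with rfl | h
      · exact Or.inl hu
      · subst h; exact Or.inr hu
    · rintro (hx | hx)
      · exact ⟨x, hx, rfl⟩
      · exact ⟨n x, hx, Quotient.sound ((hrel (n x) x).mpr (Or.inr rfl))⟩
  have : IsOpen (Quotient.mk s ⁻¹' (Quotient.mk s '' U)) := by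
    rw [hset]; exact hU.union (hn.isOpen_preimage U hU)
  exact isQuotientMap_quotient_mk'.isOpen_preimage.mp this

lemma continuousOn_of_quot (q : α → β) (hc : Continuous q) (ho : IsOpenMap q)
    (hsurj : Function.Surjective q) {s : Set β} (hs : IsOpen s) {ψ : β → γ}
    (h : ContinuousOn (ψ ∘ q) (q ⁻¹' s)) : ContinuousOn ψ s := by
  set q' : (q ⁻¹' s) → s := fun a => ⟨q a.1, a.2⟩ with hq'
  have hc' : Continuous q' := Continuous.subtype_mk (hc.comp continuous_subtype_val) _
  have hsurj' : Function.Surjective q' := by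
    rintro ⟨b, hb⟩
    obtain ⟨a, rfl⟩ := hsurj b
    exact ⟨⟨a, hb⟩, rfl⟩
  have ho' : IsOpenMap q' := by
    intro U hU
    rcases isOpen_induced_iff.mp hU with ⟨V, hV, rfl⟩
    have key : q' '' (Subtype.val ⁻¹' V) = Subtype.val ⁻¹' (q '' (V ∩ q ⁻¹' s)) := by
      ext ⟨b, hb⟩
      simp only [mem_image, mem_preimage, mem_inter_iff]
      constructor
      · rintro ⟨⟨a, ha⟩, haV, he⟩
        exact ⟨a, ⟨haV, ha⟩, congrArg Subtype.val he⟩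
      · rintro ⟨a, ⟨haV, ha⟩, he⟩
        exact ⟨⟨a, ha⟩, haV, Subtype.ext he⟩
    rw [key]
    exact (ho _ (hV.inter (hs.preimage hc))).preimage continuous_subtype_val
  have hquot : IsQuotientMap q' := ho'.isQuotientMap hc' hsurj'
  rw [continuousOn_iff_continuous_restrict]
  rw [hquot.continuous_iff]
  exact continuousOn_iff_continuous_restrict.mp h

lemma continuousOn_paste {s t : Set α} (hs : IsClosed s) (ht : IsClosed t)
    {f g : α → β} [∀ x, Decidable (x ∈ s)] (hf : ContinuousOn f s) (hg : ContinuousOn g t)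
    (heq : EqOn f g (s ∩ t)) : ContinuousOn (s.piecewise f g) (s ∪ t) := by
  have hpf : EqOn (s.piecewise f g) f s := s.piecewise_eqOn f g
  have hpg : EqOn (s.piecewise f g) g t := by
    intro y hy
    by_cases hys : y ∈ s
    · rw [Set.piecewise_eq_of_mem _ _ _ hys]; exact heq ⟨hys, hy⟩
    · rw [Set.piecewise_eq_of_notMem _ _ _ hys]
  intro x hx
  rw [continuousWithinAt_union]
  constructor
  · by_cases hxs : x ∈ s
    · exact (hf x hxs).congr hpf (hpf hxs)
    · exact continuousWithinAt_of_notMem_closure (by rwa [hs.closure_eq])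
  · by_cases hxt : x ∈ t
    · exact (hg x hxt).congr hpg (hpg hxt)
    · exact continuousWithinAt_of_notMem_closure (by rwa [ht.closure_eq])
end Helpers


-- ### Embedding of S³ into the ℓ² sphere
section Embed
open scoped RealInnerProductSpace

abbrev SL2 : Type := (sphere (0 : Hilbertl2) 1 : Set Hilbertl2)

def inclFun (x : EuclideanSpace ℝ (Fin 4)) : ∀ _ : ℕ, ℝ :=
  fun n => if h : n < 4 then x ⟨n, h⟩ else 0

lemma inclFun_memℓp (x : EuclideanSpace ℝ (Fin 4)) : Memℓp (inclFun x) 2 := by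
  apply memℓp_gen
  apply summable_of_ne_finset_zero (s := Finset.range 4)
  intro n hn
  have : ¬ n < 4 := by simpa using hn
  simp [inclFun, this]

def inclLin : EuclideanSpace ℝ (Fin 4) →ₗ[ℝ] Hilbertl2 where
  toFun x := ⟨inclFun x, inclFun_memℓp x⟩
  map_add' x y := by
    ext n
    show inclFun (x + y) n = inclFun x n + inclFun y n
    by_cases h : n < 4 <;> simp [inclFun, h]
  map_smul' c x := by
    ext n
    by_cases h : n < 4 <;> simp [inclFun, h, Pi.smul_apply]

lemma inclLin_apply (x : EuclideanSpace ℝ (Fin 4)) (n : ℕ) :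
    (inclLin x : ∀ _ : ℕ, ℝ) n = if h : n < 4 then x ⟨n, h⟩ else 0 := rfl

lemma inclLin_cont : Continuous inclLin := inclLin.continuous_of_finiteDimensional

lemma inclLin_inner (x y : EuclideanSpace ℝ (Fin 4)) :
    ⟪inclLin x, inclLin y⟫ = ⟪x, y⟫ := by
  rw [lp.inner_eq_tsum]
  rw [tsum_eq_sum (s := Finset.range 4) (by
    intro n hn
    have : ¬ n < 4 := by simpa using hn
    simp [inclLin_apply, this])]
  rw [PiLp.inner_apply]
  rw [← Fin.sum_univ_eq_sum_range (fun n => ⟪(inclLin x : ∀ _ : ℕ, ℝ) n, (inclLin y : ∀ _ : ℕ, ℝ) n⟫)]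
  apply Finset.sum_congr rfl
  intro i _
  simp [inclLin_apply, i.is_lt]

lemma inclLin_norm (x : EuclideanSpace ℝ (Fin 4)) : ‖inclLin x‖ = ‖x‖ := by
  have h1 := inclLin_inner x x
  rw [real_inner_self_eq_norm_sq, real_inner_self_eq_norm_sq] at h1
  nlinarith [norm_nonneg (inclLin x), norm_nonneg x]

def iotaS : USphere 3 → SL2 := fun y =>
  ⟨inclLin y.1, by
    rw [mem_sphere_iff_norm, sub_zero, inclLin_norm]
    have := y.2
    rwa [mem_sphere_iff_norm, sub_zero] at this⟩

lemma iotaS_cont : Continuous iotaS :=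
  Continuous.subtype_mk (inclLin_cont.comp continuous_subtype_val) _

def iotaRP : RP 3 → RPInf :=
  Quotient.lift (fun y => Quotient.mk antipodalSetoidInf (iotaS y)) (by
    rintro y z (h | h)
    · have : y = z := Subtype.ext h
      rw [this]
    · apply Quotient.sound
      right
      show (inclLin y.1 : Hilbertl2) = -(inclLin z.1)
      rw [h, map_neg])

lemma iotaRP_cont : Continuous iotaRP :=
  Continuous.quotient_lift (continuous_quotient_mk'.comp iotaS_cont) _

end Embed


-- ### The pairing space P = (S^∞ × S³)/±
section PSpace
open scoped RealInnerProductSpace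

def negSL2 : SL2 → SL2 := fun v =>
  ⟨-v.1, by
    rw [mem_sphere_iff_norm, sub_zero, norm_neg]
    have := v.2; rwa [mem_sphere_iff_norm, sub_zero] at this⟩

lemma negSL2_cont : Continuous negSL2 :=
  Continuous.subtype_mk (continuous_neg.comp continuous_subtype_val) _

lemma negSL2_invol (v : SL2) : negSL2 (negSL2 v) = v := by
  apply Subtype.ext; simp [negSL2]

def negS3 : USphere 3 → USphere 3 := fun v =>
  ⟨-v.1, by
    rw [mem_sphere_iff_norm, sub_zero, norm_neg]
    have := v.2; rwa [mem_sphere_iff_norm, sub_zero] at this⟩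

lemma negS3_cont : Continuous negS3 :=
  Continuous.subtype_mk (continuous_neg.comp continuous_subtype_val) _

lemma negS3_invol (v : USphere 3) : negS3 (negS3 v) = v := by
  apply Subtype.ext; simp [negS3]

lemma isOpenMap_mkInf : IsOpenMap (Quotient.mk antipodalSetoidInf) := by
  apply isOpenMap_mk_of_invol _ negSL2 negSL2_cont negSL2_invol
  intro x y
  show ((x : Hilbertl2) = y ∨ (x : Hilbertl2) = -(y : Hilbertl2)) ↔ _
  constructor
  · rintro (h | h)
    · exact Or.inl (Subtype.ext h)
    · exact Or.inr (Subtype.ext h)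
  · rintro (rfl | rfl)
    · exact Or.inl rfl
    · exact Or.inr rfl

def PSetoid : Setoid (SL2 × USphere 3) where
  r z w := (z.1.1 = w.1.1 ∧ z.2.1 = w.2.1) ∨ (z.1.1 = -w.1.1 ∧ z.2.1 = -w.2.1)
  iseqv := by
    constructor
    · intro z; exact Or.inl ⟨rfl, rfl⟩
    · rintro z w (⟨h1, h2⟩ | ⟨h1, h2⟩)
      · exact Or.inl ⟨h1.symm, h2.symm⟩
      · right; rw [h1, h2]; simp
    · rintro x y z (⟨h1, h2⟩ | ⟨h1, h2⟩) (⟨h3, h4⟩ | ⟨h3, h4⟩)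
      · exact Or.inl ⟨h1.trans h3, h2.trans h4⟩
      · right; rw [h1, h2, h3, h4]; exact ⟨rfl, rfl⟩
      · right; rw [h1, h2, h3, h4]; exact ⟨rfl, rfl⟩
      · left; rw [h1, h2, h3, h4]; simp

def PSp : Type := Quotient PSetoid

instance : TopologicalSpace PSp := by unfold PSp; infer_instance

def negPr : SL2 × USphere 3 → SL2 × USphere 3 := fun z => (negSL2 z.1, negS3 z.2)

lemma isOpenMap_mkP : IsOpenMap (Quotient.mk PSetoid) := by
  apply isOpenMap_mk_of_invol _ negPr
    ((negSL2_cont.comp continuous_fst).prodMk (negS3_cont.comp continuous_snd))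
    (by intro z; simp [negPr, negSL2_invol, negS3_invol])
  intro x y
  show ((x.1.1 = y.1.1 ∧ x.2.1 = y.2.1) ∨ (x.1.1 = -y.1.1 ∧ x.2.1 = -y.2.1)) ↔ _
  constructor
  · rintro (⟨h1, h2⟩ | ⟨h1, h2⟩)
    · exact Or.inl (Prod.ext (Subtype.ext h1) (Subtype.ext h2))
    · exact Or.inr (Prod.ext (Subtype.ext h1) (Subtype.ext h2))
  · rintro (rfl | rfl)
    · exact Or.inl ⟨rfl, rfl⟩
    · exact Or.inr ⟨rfl, rfl⟩

def pi1 : PSp → RPInf :=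
  Quotient.lift (fun z => Quotient.mk antipodalSetoidInf z.1) (by
    rintro z w (⟨h1, _⟩ | ⟨h1, _⟩)
    · exact congrArg _ (Subtype.ext h1)
    · exact Quotient.sound (Or.inr h1))

lemma pi1_cont : Continuous pi1 :=
  Continuous.quotient_lift (continuous_quotient_mk'.comp continuous_fst) _

def pi2 : PSp → RP 3 :=
  Quotient.lift (fun z => Quotient.mk (antipodalSetoid 3) z.2) (by
    rintro z w (⟨_, h2⟩ | ⟨_, h2⟩)
    · exact congrArg _ (Subtype.ext h2)
    · exact Quotient.sound (Or.inr h2))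

lemma pi2_cont : Continuous pi2 :=
  Continuous.quotient_lift (continuous_quotient_mk'.comp continuous_snd) _

def jmap : RP 3 → PSp :=
  Quotient.lift (fun y => Quotient.mk PSetoid (iotaS y, y)) (by
    rintro y z (h | h)
    · have : y = z := Subtype.ext h
      rw [this]
    · apply Quotient.sound
      right
      constructor
      · show (inclLin y.1 : Hilbertl2) = -(inclLin z.1)
        rw [h, map_neg]
      · exact h)

lemma jmap_cont : Continuous jmap :=
  Continuous.quotient_lift (continuous_quotient_mk'.comp
    (iotaS_cont.prodMk continuous_id)) _

lemma pi2_jmap (p : RP 3) : pi2 (jmap p) = p := by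
  induction p using Quotient.ind
  rfl

lemma pi1_jmap (p : RP 3) : pi1 (jmap p) = iotaRP p := by
  induction p using Quotient.ind
  rfl

end PSpace


-- ### Chart functions rho, sgn, Theta, Phi
section Charts
open scoped RealInnerProductSpace

def rho (u : SL2) : RPInf → ℝ :=
  Quotient.lift (fun v : SL2 => (⟪(v : Hilbertl2), (u : Hilbertl2)⟫) ^ 2) (by
    rintro v w (h | h)
    · rw [show v = w from Subtype.ext h]
    · show (⟪(v : Hilbertl2), (u : Hilbertl2)⟫) ^ 2 = _
      rw [h, inner_neg_left]; ring)

lemma rho_cont (u : SL2) : Continuous (rho u) :=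
  Continuous.quotient_lift ((continuous_subtype_val.inner continuous_const).pow 2) _

lemma rho_mk_ne (u v : SL2) :
    rho u (Quotient.mk antipodalSetoidInf v) ≠ 0 ↔
      ⟪(v : Hilbertl2), (u : Hilbertl2)⟫ ≠ 0 :=
  not_congr sq_eq_zero_iff

def sgn (u v : SL2) (y : USphere 3) : USphere 3 :=
  if 0 < ⟪(v : Hilbertl2), (u : Hilbertl2)⟫ then y else negS3 y

lemma sgn_sgn (u v : SL2) (y : USphere 3) : sgn u v (sgn u v y) = y := by
  unfold sgn
  split
  · rfl
  · exact negS3_invol y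

lemma sgn_negy (u v : SL2) (y : USphere 3) : sgn u v (negS3 y) = negS3 (sgn u v y) := by
  unfold sgn; split <;> rfl

lemma sgn_negv (u v : SL2) (y : USphere 3)
    (h : ⟪(v : Hilbertl2), (u : Hilbertl2)⟫ ≠ 0) :
    sgn u (negSL2 v) y = negS3 (sgn u v y) := by
  have hneg : ⟪((negSL2 v : SL2) : Hilbertl2), (u : Hilbertl2)⟫
      = -⟪(v : Hilbertl2), (u : Hilbertl2)⟫ := by
    show ⟪-(v : Hilbertl2), (u : Hilbertl2)⟫ = _
    rw [inner_neg_left]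
  unfold sgn
  rw [hneg]
  split_ifs with h1 h2 h2
  · linarith
  · exact (negS3_invol y).symm
  · rfl
  · exact absurd (le_antisymm (not_lt.mp h2) (by linarith [not_lt.mp h1])) h

def Theta (u : SL2) : RPInf × USphere 3 → PSp :=
  fun z => Quotient.mk PSetoid (z.1.out, sgn u z.1.out z.2)

def Phi (u : SL2) : PSp → USphere 3 := fun p => sgn u p.out.1 p.out.2

lemma out_cases_inf (v : SL2) :
    (Quotient.mk antipodalSetoidInf v).out = v ∨
      (Quotient.mk antipodalSetoidInf v).out = negSL2 v := by
  have h := Quotient.exact ((Quotient.mk antipodalSetoidInf v).out_eq)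
  rcases h with h | h
  · exact Or.inl (Subtype.ext h)
  · exact Or.inr (Subtype.ext h)

lemma out_cases_P (z : SL2 × USphere 3) :
    (Quotient.mk PSetoid z).out = z ∨ (Quotient.mk PSetoid z).out = negPr z := by
  have h := Quotient.exact ((Quotient.mk PSetoid z).out_eq)
  rcases h with ⟨h1, h2⟩ | ⟨h1, h2⟩
  · exact Or.inl (Prod.ext (Subtype.ext h1) (Subtype.ext h2))
  · exact Or.inr (Prod.ext (Subtype.ext h1) (Subtype.ext h2))

lemma mk_neg_pair (v : SL2) (y : USphere 3) :
    Quotient.mk PSetoid (negSL2 v, negS3 y) = Quotient.mk PSetoid (v, y) :=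
  Quotient.sound (Or.inr ⟨rfl, rfl⟩)

lemma Theta_mk (u v : SL2) (y : USphere 3)
    (h : ⟪(v : Hilbertl2), (u : Hilbertl2)⟫ ≠ 0) :
    Theta u (Quotient.mk antipodalSetoidInf v, y) = Quotient.mk PSetoid (v, sgn u v y) := by
  unfold Theta
  rcases out_cases_inf v with he | he <;> rw [he]
  rw [sgn_negv u v y h, mk_neg_pair]

lemma Phi_mk (u : SL2) (z : SL2 × USphere 3)
    (h : ⟪(z.1 : Hilbertl2), (u : Hilbertl2)⟫ ≠ 0) :
    Phi u (Quotient.mk PSetoid z) = sgn u z.1 z.2 := by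
  unfold Phi
  rcases out_cases_P z with he | he <;> rw [he]
  show sgn u (negSL2 z.1) (negS3 z.2) = _
  rw [sgn_negv _ _ _ h, sgn_negy, negS3_invol]

lemma pi1_Theta (u : SL2) (p : RPInf) (y : USphere 3) :
    pi1 (Theta u (p, y)) = p := by
  show Quotient.mk antipodalSetoidInf p.out = p
  exact p.out_eq

lemma Theta_pi1_Phi (u : SL2) (p : PSp) (h : rho u (pi1 p) ≠ 0) :
    Theta u (pi1 p, Phi u p) = p := by
  obtain ⟨z, rfl⟩ := Quotient.exists_rep p
  have h1 : ⟪(z.1 : Hilbertl2), (u : Hilbertl2)⟫ ≠ 0 := by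
    rw [← rho_mk_ne]
    exact h
  rw [Phi_mk u z h1]
  show Theta u (Quotient.mk antipodalSetoidInf z.1, sgn u z.1 z.2) = _
  rw [Theta_mk u z.1 _ h1, sgn_sgn]

end Charts


-- ### Continuity of Theta and Phi
section ContTheta
open scoped RealInnerProductSpace

lemma theta_contOn (u : SL2) :
    ContinuousOn (Theta u) {z : RPInf × USphere 3 | rho u z.1 ≠ 0} := by
  have hs : IsOpen {z : RPInf × USphere 3 | rho u z.1 ≠ 0} := by
    have he : {z : RPInf × USphere 3 | rho u z.1 ≠ 0}
        = (fun z : RPInf × USphere 3 => rho u z.1) ⁻¹' {0}ᶜ := rfl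
    rw [he]
    exact isOpen_compl_singleton.preimage ((rho_cont u).comp continuous_fst)
  apply continuousOn_of_quot
    (Prod.map (Quotient.mk antipodalSetoidInf) (id : USphere 3 → USphere 3))
    (continuous_quotient_mk'.prodMap continuous_id)
    (isOpenMap_mkInf.prodMap IsOpenMap.id)
    (by
      rintro ⟨b, y⟩
      exact ⟨(b.out, y), by simp [Prod.map, Quotient.out_eq]⟩)
    hs
  have hset : (Prod.map (Quotient.mk antipodalSetoidInf) (id : USphere 3 → USphere 3)) ⁻¹'
      {z : RPInf × USphere 3 | rho u z.1 ≠ 0}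
      = {w : SL2 × USphere 3 | ⟪(w.1 : Hilbertl2), (u : Hilbertl2)⟫ ≠ 0} := by
    ext w
    simp only [Set.mem_preimage, Set.mem_setOf_eq, Prod.map]
    exact rho_mk_ne u w.1
  refine ContinuousOn.mono ?_ hset.subset
  apply ContinuousOn.congr
    (f := fun w : SL2 × USphere 3 => Quotient.mk PSetoid (w.1, sgn u w.1 w.2))
  · intro w hw
    apply ContinuousAt.continuousWithinAt
    rcases lt_or_gt_of_ne hw with hlt | hgt
    · have hopen : IsOpen {w' : SL2 × USphere 3 |
          ⟪(w'.1 : Hilbertl2), (u : Hilbertl2)⟫ < 0} :=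
        isOpen_lt ((continuous_subtype_val.comp continuous_fst).inner continuous_const) continuous_const
      apply ContinuousAt.congr
        (f := fun w' : SL2 × USphere 3 => Quotient.mk PSetoid (w'.1, negS3 w'.2))
      · exact (continuous_quotient_mk'.comp
          (continuous_fst.prodMk (negS3_cont.comp continuous_snd))).continuousAt
      · apply Filter.eventuallyEq_of_mem (hopen.mem_nhds hlt)
        intro w' hw'
        show Quotient.mk PSetoid (w'.1, negS3 w'.2) = Quotient.mk PSetoid (w'.1, sgn u w'.1 w'.2)
        simp only [Set.mem_setOf_eq] at hw'
        unfold sgn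
        rw [if_neg (not_lt.mpr (le_of_lt hw'))]
    · have hopen : IsOpen {w' : SL2 × USphere 3 |
          0 < ⟪(w'.1 : Hilbertl2), (u : Hilbertl2)⟫} :=
        isOpen_lt continuous_const ((continuous_subtype_val.comp continuous_fst).inner continuous_const)
      apply ContinuousAt.congr
        (f := fun w' : SL2 × USphere 3 => Quotient.mk PSetoid (w'.1, w'.2))
      · exact (continuous_quotient_mk'.comp
          (continuous_fst.prodMk continuous_snd)).continuousAt
      · apply Filter.eventuallyEq_of_mem (hopen.mem_nhds hgt)
        intro w' hw'
        show Quotient.mk PSetoid (w'.1, w'.2) = Quotient.mk PSetoid (w'.1, sgn u w'.1 w'.2)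
        simp only [Set.mem_setOf_eq] at hw'
        unfold sgn
        rw [if_pos hw']
  · intro w hw
    exact Theta_mk u w.1 w.2 hw

lemma phi_contOn (u : SL2) :
    ContinuousOn (Phi u) {p : PSp | rho u (pi1 p) ≠ 0} := by
  have hs : IsOpen {p : PSp | rho u (pi1 p) ≠ 0} := by
    have he : {p : PSp | rho u (pi1 p) ≠ 0} = (fun p => rho u (pi1 p)) ⁻¹' {0}ᶜ := rfl
    rw [he]
    exact isOpen_compl_singleton.preimage ((rho_cont u).comp pi1_cont)
  apply continuousOn_of_quot (Quotient.mk PSetoid) continuous_quotient_mk' isOpenMap_mkP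
    (fun p => ⟨p.out, p.out_eq⟩) hs
  have hset : (Quotient.mk PSetoid) ⁻¹' {p : PSp | rho u (pi1 p) ≠ 0}
      = {w : SL2 × USphere 3 | ⟪(w.1 : Hilbertl2), (u : Hilbertl2)⟫ ≠ 0} := by
    ext w
    simp only [Set.mem_preimage, Set.mem_setOf_eq]
    exact rho_mk_ne u w.1
  refine ContinuousOn.mono ?_ hset.subset
  apply ContinuousOn.congr (f := fun w : SL2 × USphere 3 => sgn u w.1 w.2)
  · intro w hw
    apply ContinuousAt.continuousWithinAt
    rcases lt_or_gt_of_ne hw with hlt | hgt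
    · have hopen : IsOpen {w' : SL2 × USphere 3 |
          ⟪(w'.1 : Hilbertl2), (u : Hilbertl2)⟫ < 0} :=
        isOpen_lt ((continuous_subtype_val.comp continuous_fst).inner continuous_const) continuous_const
      apply ContinuousAt.congr (f := fun w' : SL2 × USphere 3 => negS3 w'.2)
      · exact (negS3_cont.comp continuous_snd).continuousAt
      · apply Filter.eventuallyEq_of_mem (hopen.mem_nhds hlt)
        intro w' hw'
        show negS3 w'.2 = sgn u w'.1 w'.2
        simp only [Set.mem_setOf_eq] at hw'
        unfold sgn
        rw [if_neg (not_lt.mpr (le_of_lt hw'))]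
    · have hopen : IsOpen {w' : SL2 × USphere 3 |
          0 < ⟪(w'.1 : Hilbertl2), (u : Hilbertl2)⟫} :=
        isOpen_lt continuous_const ((continuous_subtype_val.comp continuous_fst).inner continuous_const)
      apply ContinuousAt.congr (f := fun w' : SL2 × USphere 3 => w'.2)
      · exact continuous_snd.continuousAt
      · apply Filter.eventuallyEq_of_mem (hopen.mem_nhds hgt)
        intro w' hw'
        show w'.2 = sgn u w'.1 w'.2
        simp only [Set.mem_setOf_eq] at hw'
        unfold sgn
        rw [if_pos hw']
  · intro w hw
    exact Phi_mk u w hw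

end ContTheta


/-- If `X` is a compactum with `dim X ≤ 3` and `ℝP^∞ ∈ AE(X)`, then `ℝP³ ∈ AE(X)`. -/
theorem rp3_absolute_extensor_of_rpinf_absolute_extensor
    (X : Type) [TopologicalSpace X] [CompactSpace X] [TopologicalSpace.MetrizableSpace X]
    (hdim : IsAbsoluteExtensor X (USphere 3))
    (hZ2 : IsAbsoluteExtensor X RPInf) :
    IsAbsoluteExtensor X (RP 3) := by
  classical
  intro A hA f
  -- Step 1: extend the composition with ℝP³ → ℝP^∞ using hZ2
  obtain ⟨W, hW⟩ := hZ2 A hA ⟨fun a => iotaRP (f a), iotaRP_cont.comp f.continuous⟩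
  -- Step 2: charts on X trivializing the double cover classified by W
  set u : X → SL2 := fun x => (W x).out with hu
  set V : X → Set X := fun x => {x' | rho (u x) (W x') ≠ 0} with hVdef
  have hVopen : ∀ x : X, IsOpen (V x) := by
    intro x
    have he : V x = (fun x' => rho (u x) (W x')) ⁻¹' {0}ᶜ := rfl
    rw [he]
    exact isOpen_compl_singleton.preimage ((rho_cont (u x)).comp W.continuous)
  have hVmem : ∀ x : X, x ∈ V x := by
    intro x
    show rho (u x) (W x) ≠ 0
    have heq : W x = Quotient.mk antipodalSetoidInf (u x) := ((W x).out_eq).symm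
    rw [heq, rho_mk_ne]
    have hmem := (u x).2
    rw [mem_sphere_iff_norm, sub_zero] at hmem
    rw [real_inner_self_eq_norm_sq, hmem]
    norm_num
  have hcover : (univ : Set X) ⊆ ⋃ x, V x := fun x _ => mem_iUnion.mpr ⟨x, hVmem x⟩
  obtain ⟨t, ht⟩ := isCompact_univ.elim_finite_subcover V hVopen hcover
  -- Step 3: closed shrinking of the finite cover
  obtain ⟨v, hvcover, _hvopen, hvcl⟩ :=
    exists_subset_iUnion_closure_subset (u := fun i : ↥t => V i.1) isClosed_univ
      (fun i => hVopen i.1) (fun x _ => Set.toFinite _)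
      (by
        intro x hx
        obtain ⟨i, hi, hxi⟩ := mem_iUnion₂.mp (ht hx)
        exact mem_iUnion.mpr ⟨⟨i, hi⟩, hxi⟩)
  set C : ↥t → Set X := fun i => closure (v i) with hC
  have hCclosed : ∀ i, IsClosed (C i) := fun i => isClosed_closure
  -- Step 4: inductive construction of the lift to the pairing space
  have main : ∀ s : Finset ↥t, ∃ G : X → PSp,
      ContinuousOn G (A ∪ ⋃ i ∈ s, C i) ∧
      (∀ x ∈ A ∪ ⋃ i ∈ s, C i, pi1 (G x) = W x) ∧
      (∀ a : A, G a = jmap (f a)) := by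
    intro s
    induction s using Finset.induction_on with
    | empty =>
        have hbase : USphere 3 :=
          ⟨EuclideanSpace.single 0 1, by simp [mem_sphere_iff_norm]⟩
        refine ⟨fun x => if h : x ∈ A then jmap (f ⟨x, h⟩)
          else jmap (pcov 3 hbase), ?_, ?_, ?_⟩
        · have hD : A ∪ ⋃ i ∈ (∅ : Finset ↥t), C i = A := by simp
          rw [hD, continuousOn_iff_continuous_restrict]
          have hres : A.domRestrict (fun x => if h : x ∈ A then jmap (f ⟨x, h⟩)
              else jmap (pcov 3 hbase)) = fun a : A => jmap (f a) := by
            funext a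
            exact dif_pos a.2
          rw [hres]
          exact jmap_cont.comp f.continuous
        · intro x hx
          have hx' : x ∈ A := by simpa using hx
          simp only [dif_pos hx', pi1_jmap]
          exact (hW ⟨x, hx'⟩).symm
        · intro a
          simp only [dif_pos a.2, Subtype.coe_eta]
    | @insert k s hk ih =>
        obtain ⟨G, hGc, hGpi, hGA⟩ := ih
        set D := A ∪ ⋃ i ∈ s, C i with hD
        have hDclosed : IsClosed D :=
          hA.union (Set.Finite.isClosed_biUnion s.finite_toSet (fun i _ => hCclosed i))
        have hrho : ∀ x ∈ C k, rho (u k.1) (W x) ≠ 0 := fun x hx => hvcl k hx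
        have hφ : ContinuousOn (fun x => Phi (u k.1) (G x)) (D ∩ C k) := by
          apply (phi_contOn (u k.1)).comp (hGc.mono inter_subset_left)
          intro x hx
          show rho (u k.1) (pi1 (G x)) ≠ 0
          rw [hGpi x hx.1]
          exact hrho x hx.2
        obtain ⟨g', hg'⟩ := hdim (D ∩ C k) (hDclosed.inter (hCclosed k))
          ⟨(D ∩ C k).restrict (fun x => Phi (u k.1) (G x)),
            continuousOn_iff_continuous_restrict.mp hφ⟩
        set H : X → PSp := fun x => Theta (u k.1) (W x, g' x) with hH
        have hHc : ContinuousOn H (C k) := by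
          apply (theta_contOn (u k.1)).comp
            ((W.continuous.prodMk g'.continuous).continuousOn)
          intro x hx
          show rho (u k.1) (W x) ≠ 0
          exact hrho x hx
        have heq : EqOn G H (D ∩ C k) := by
          intro x hx
          have h1 : g' x = Phi (u k.1) (G x) := hg' ⟨x, hx⟩
          show G x = Theta (u k.1) (W x, g' x)
          rw [h1, ← hGpi x hx.1]
          exact (Theta_pi1_Phi (u k.1) (G x) (by
            rw [hGpi x hx.1]
            exact hrho x hx.2)).symm
        have hdom : A ∪ ⋃ i ∈ insert k s, C i = D ∪ C k := by
          rw [Finset.set_biUnion_insert, hD, union_comm (C k), ← union_assoc]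
        refine ⟨D.piecewise G H, ?_, ?_, ?_⟩
        · rw [hdom]
          exact continuousOn_paste hDclosed (hCclosed k) hGc hHc heq
        · intro x hx
          rw [hdom] at hx
          by_cases hxD : x ∈ D
          · rw [Set.piecewise_eq_of_mem _ _ _ hxD]
            exact hGpi x hxD
          · rw [Set.piecewise_eq_of_notMem _ _ _ hxD]
            exact pi1_Theta (u k.1) (W x) (g' x)
        · intro a
          have haD : (a : X) ∈ D := mem_union_left _ a.2
          rw [Set.piecewise_eq_of_mem _ _ _ haD]
          exact hGA a
  -- Step 5: conclude
  obtain ⟨G, hGc, _hGpi, hGA⟩ := main t.attach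
  have hXfull : A ∪ ⋃ i ∈ t.attach, C i = univ := by
    apply eq_univ_of_univ_subset
    intro x _
    obtain ⟨i, hi⟩ := mem_iUnion.mp (hvcover (mem_univ x))
    exact Or.inr (mem_biUnion (t.mem_attach i) (subset_closure hi))
  have hGcont : Continuous G := by
    rw [← continuousOn_univ, ← hXfull]
    exact hGc
  refine ⟨⟨fun x => pi2 (G x), pi2_cont.comp hGcont⟩, ?_⟩
  intro a
  show pi2 (G a) = f a
  rw [hGA a, pi2_jmap]
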